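/- For every integer k ≥ 2, ∑_{i=1}^{k−1} 1/(4 sin²(iπ/(2k))) = (k−1)(k+1)/6. -/

import Mathlib

open Finset Complex
lemma sumcast1 (n : ℕ) : ∑ m ∈ range n, (m:ℂ) = n*(n-1)/2 := by
  induction n with
  | zero => simp
  | succ n ih => rw [Finset.sum_range_succ, ih]; push_cast; ring
lemma sumcast2 (n : ℕ) : ∑ m ∈ range n, (m:ℂ)*((m:ℂ)-1) = n*(n-1)*(n-2)/3 := by
  induction n with
  | zero => simp
  | succ n ih => rw [Finset.sum_range_succ, ih]; push_cast; ring
lemma tele1 (n : ℕ) (x : ℂ) :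
    (x-1) * ∑ m ∈ range n, (m:ℂ)*x^m = ((n:ℂ)-1)*x^n - (∑ m ∈ range n, x^m) + 1 := by
  induction n with
  | zero => simp
  | succ n ih =>
    rw [Finset.sum_range_succ, Finset.sum_range_succ, mul_add, ih]; push_cast; ring
lemma tele2 (n : ℕ) (x : ℂ) :
    (x-1) * ∑ m ∈ range n, (m:ℂ)*((m:ℂ)-1)*x^m
      = ((n:ℂ)-1)*((n:ℂ)-2)*x^n - 2*(∑ m ∈ range n, (m:ℂ)*x^m)
        + 2*(∑ m ∈ range n, x^m) - 2 := by
  induction n with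
  | zero => simp
  | succ n ih =>
    rw [Finset.sum_range_succ, Finset.sum_range_succ, Finset.sum_range_succ, mul_add, ih]
    push_cast; ring

lemma complexF (n : ℕ) (hn : 2 ≤ n) :
    ∑ j ∈ Ico 1 n, ((1 - Complex.exp (2*(Real.pi:ℂ)*I/n) ^ j)⁻¹
        - ((1 - Complex.exp (2*(Real.pi:ℂ)*I/n) ^ j)⁻¹)^2)
      = ((n:ℂ)^2 - 1)/12 := by
  set ζ : ℂ := Complex.exp (2*(Real.pi:ℂ)*I/n) with hζ
  have hn0 : (n:ℂ) ≠ 0 := Nat.cast_ne_zero.mpr (by omega)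
  have hprim : IsPrimitiveRoot ζ n := Complex.isPrimitiveRoot_exp n (by omega)
  have hζn : ζ ^ n = 1 := hprim.pow_eq_one
  -- basic facts for j in range
  have hne : ∀ m ∈ Ico 1 n, ζ ^ m ≠ 1 := by
    intro m hm
    simp only [Finset.mem_Ico] at hm
    exact hprim.pow_ne_one_of_pos_of_lt (by omega) hm.2
  have hpn : ∀ m : ℕ, (ζ ^ m) ^ n = 1 := by
    intro m
    rw [← pow_mul, mul_comm, pow_mul, hζn, one_pow]
  have hsub : ∀ j ∈ Ico 1 n, ζ ^ j - 1 ≠ 0 := fun j hj => sub_ne_zero.mpr (hne j hj)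
  -- geometric sum zero
  have hG : ∀ m ∈ Ico 1 n, ∑ i ∈ range n, (ζ ^ m) ^ i = 0 := by
    intro m hm
    rw [geom_sum_eq (hne m hm), hpn m, sub_self, zero_div]
  -- inner sum over Ico 1 n
  have hinner : ∀ m ∈ Ico 1 n, ∑ j ∈ Ico 1 n, (ζ ^ m) ^ j = -1 := by
    intro m hm
    have h0 : ∑ j ∈ Ico 0 n, (ζ ^ m) ^ j = (ζ^m)^0 + ∑ j ∈ Ico 1 n, (ζ ^ m) ^ j :=
      Finset.sum_eq_sum_Ico_succ_bot (by omega) _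
    have : ∑ j ∈ Ico 0 n, (ζ ^ m) ^ j = 0 := by
      rw [← Finset.range_eq_Ico] at *
      exact hG m hm
    rw [this, pow_zero] at h0
    linear_combination -h0
  -- pointwise S1
  have hS1 : ∀ j ∈ Ico 1 n, ∑ m ∈ range n, (m:ℂ) * (ζ^j)^m = (n:ℂ) / (ζ^j - 1) := by
    intro j hj
    have h := tele1 n (ζ^j)
    rw [hpn j, hG j hj] at h
    rw [eq_div_iff (hsub j hj)]
    linear_combination h
  -- pointwise S2
  have hS2 : ∀ j ∈ Ico 1 n, ∑ m ∈ range n, (m:ℂ)*((m:ℂ)-1) * (ζ^j)^m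
      = (((n:ℂ)-1)*((n:ℂ)-2) - 2) / (ζ^j - 1) - 2*(n:ℂ) / (ζ^j - 1)^2 := by
    intro j hj
    have h := tele2 n (ζ^j)
    rw [hpn j, hG j hj, hS1 j hj] at h
    have hz := hsub j hj
    have hz2 : (ζ^j - 1)^2 ≠ 0 := pow_ne_zero 2 hz
    field_simp at h
    rw [div_sub_div _ _ hz hz2, eq_div_iff (mul_ne_zero hz hz2)]
    linear_combination (ζ^j - 1) * h
  set A : ℂ := ∑ j ∈ Ico 1 n, (ζ^j - 1)⁻¹ with hA
  set B : ℂ := ∑ j ∈ Ico 1 n, ((ζ^j - 1)⁻¹)^2 with hB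
  have swap1 : ∑ j ∈ Ico 1 n, ∑ m ∈ range n, (m:ℂ) * (ζ^j)^m
      = ∑ m ∈ range n, (m:ℂ) * ∑ j ∈ Ico 1 n, (ζ^m)^j := by
    rw [Finset.sum_comm]
    refine Finset.sum_congr rfl fun m _ => ?_
    rw [Finset.mul_sum]
    refine Finset.sum_congr rfl fun j _ => ?_
    rw [← pow_mul, ← pow_mul, mul_comm j m]
  have swap2 : ∑ j ∈ Ico 1 n, ∑ m ∈ range n, (m:ℂ)*((m:ℂ)-1) * (ζ^j)^m
      = ∑ m ∈ range n, (m:ℂ)*((m:ℂ)-1) * ∑ j ∈ Ico 1 n, (ζ^m)^j := by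
    rw [Finset.sum_comm]
    refine Finset.sum_congr rfl fun m _ => ?_
    rw [Finset.mul_sum]
    refine Finset.sum_congr rfl fun j _ => ?_
    rw [← pow_mul, ← pow_mul, mul_comm j m]
  have hmval : ∀ m ∈ range n, (m:ℂ) * ∑ j ∈ Ico 1 n, (ζ^m)^j = -(m:ℂ) := by
    intro m hm
    rcases Nat.eq_zero_or_pos m with h0 | h0
    · subst h0; simp
    · rw [hinner m (Finset.mem_Ico.mpr ⟨h0, Finset.mem_range.mp hm⟩)]; ring
  have hmval2 : ∀ m ∈ range n, (m:ℂ)*((m:ℂ)-1) * ∑ j ∈ Ico 1 n, (ζ^m)^j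
      = -((m:ℂ)*((m:ℂ)-1)) := by
    intro m hm
    rcases Nat.eq_zero_or_pos m with h0 | h0
    · subst h0; simp
    · rw [hinner m (Finset.mem_Ico.mpr ⟨h0, Finset.mem_range.mp hm⟩)]; ring
  have hAval : A = -(((n:ℂ)-1)/2) := by
    have h1 : ∑ j ∈ Ico 1 n, ∑ m ∈ range n, (m:ℂ) * (ζ^j)^m = (n:ℂ) * A := by
      rw [Finset.sum_congr rfl hS1, hA]
      simp_rw [div_eq_mul_inv, ← Finset.mul_sum]
    have h2 : ∑ j ∈ Ico 1 n, ∑ m ∈ range n, (m:ℂ) * (ζ^j)^m = -((n:ℂ)*((n:ℂ)-1)/2) := by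
      rw [swap1, Finset.sum_congr rfl hmval, Finset.sum_neg_distrib, sumcast1]
    rw [h1] at h2
    apply mul_left_cancel₀ hn0
    rw [h2]; ring
  have hBval : B = ((n:ℂ)-1)*(5-(n:ℂ))/12 := by
    have h1 : ∑ j ∈ Ico 1 n, ∑ m ∈ range n, (m:ℂ)*((m:ℂ)-1) * (ζ^j)^m
        = (((n:ℂ)-1)*((n:ℂ)-2) - 2) * A - 2*(n:ℂ) * B := by
      rw [Finset.sum_congr rfl hS2, Finset.sum_sub_distrib, hA, hB]
      simp_rw [div_eq_mul_inv, ← Finset.mul_sum, inv_pow]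
    have h2 : ∑ j ∈ Ico 1 n, ∑ m ∈ range n, (m:ℂ)*((m:ℂ)-1) * (ζ^j)^m
        = -((n:ℂ)*((n:ℂ)-1)*((n:ℂ)-2)/3) := by
      rw [swap2, Finset.sum_congr rfl hmval2, Finset.sum_neg_distrib, sumcast2]
    rw [h1, hAval] at h2
    have h2n : (2*(n:ℂ)) ≠ 0 := by
      simp [hn0]
    apply mul_left_cancel₀ h2n
    linear_combination -h2
  have hterm : ∀ j ∈ Ico 1 n, (1 - ζ^j)⁻¹ - ((1 - ζ^j)⁻¹)^2
      = -((ζ^j - 1)⁻¹) - ((ζ^j - 1)⁻¹)^2 := by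
    intro j hj
    have : (1 : ℂ) - ζ^j = -(ζ^j - 1) := by ring
    rw [this, inv_neg]
    ring
  rw [Finset.sum_congr rfl hterm, Finset.sum_sub_distrib, Finset.sum_neg_distrib]
  rw [← hA, ← hB, hAval, hBval]
  ring


lemma one_sub_exp (w : ℂ) :
    1 - Complex.exp (2*w*I) = -2*I*Complex.sin w * Complex.exp (w*I) := by
  rw [Complex.sin]
  have h1 : Complex.exp (2*w*I) = Complex.exp (w*I) * Complex.exp (w*I) := by
    rw [← Complex.exp_add]; ring_nf
  have h2 : Complex.exp (-(w*I)) * Complex.exp (w*I) = 1 := by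
    rw [← Complex.exp_add]; simp
  have h3 : Complex.exp (-w*I) = Complex.exp (-(w*I)) := by ring_nf
  rw [h1, h3]
  linear_combination (-1 : ℂ) * h2 +
    (Complex.exp (w*I) * Complex.exp (-(w*I)) - Complex.exp (w*I)^2) * Complex.I_sq

lemma inv_comb (s E : ℂ) (hs : s ≠ 0) (hE : E ≠ 0) (h : 1 - E^2 = -2*I*s*E) :
    (1 - E^2)⁻¹ - ((1 - E^2)⁻¹)^2 = 1/(4*s^2) := by
  have hc : (1 : ℂ) - E^2 ≠ 0 := by
    rw [h]
    simp [hs, hE, Complex.I_ne_zero]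
  have h2 : ((1:ℂ)-E^2)^2 = -4*s^2*E^2 := by
    rw [h]
    linear_combination (4*s^2*E^2) * Complex.I_sq
  have key : ((1:ℂ)-E^2)⁻¹ - (((1:ℂ)-E^2)⁻¹)^2 = -E^2/((1-E^2)^2) := by
    field_simp
    ring
  rw [key, h2, div_eq_div_iff (by simp [hs, hE]) (mul_ne_zero (by norm_num) (pow_ne_zero 2 hs))]
  ring

lemma bridge (n j : ℕ) (hn : 2 ≤ n) (hj1 : 1 ≤ j) (hjn : j < n) :
    ((1 / (4 * Real.sin ((j:ℝ)*Real.pi/(n:ℝ))^2) : ℝ) : ℂ)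
      = (1 - Complex.exp (2*(Real.pi:ℂ)*I/(n:ℕ)) ^ j)⁻¹
        - ((1 - Complex.exp (2*(Real.pi:ℂ)*I/(n:ℕ)) ^ j)⁻¹)^2 := by
  have hn0 : (n:ℝ) ≠ 0 := Nat.cast_ne_zero.mpr (by omega)
  set θ : ℝ := (j:ℝ)*Real.pi/(n:ℝ) with hθ
  have hj0 : (0:ℝ) < (j:ℝ) := by exact_mod_cast hj1
  have hθpos : 0 < θ := by rw [hθ]; positivity
  have hθlt : θ < Real.pi := by
    rw [hθ, div_lt_iff₀ (by positivity)]
    have : (j:ℝ) < (n:ℝ) := by exact_mod_cast hjn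
    nlinarith [Real.pi_pos]
  have hs : Real.sin θ ≠ 0 := ne_of_gt (Real.sin_pos_of_pos_of_lt_pi hθpos hθlt)
  have hpow : Complex.exp (2*(Real.pi:ℂ)*I/(n:ℕ)) ^ j = Complex.exp (2*(θ:ℂ)*I) := by
    rw [← Complex.exp_nat_mul]
    congr 1
    simp only [hθ]
    push_cast [Complex.ofReal_mul, Complex.ofReal_div]
    field_simp
  set E : ℂ := Complex.exp ((θ:ℂ)*I) with hE
  have hE2 : Complex.exp (2*(θ:ℂ)*I) = E^2 := by
    rw [hE, sq, ← Complex.exp_add]; ring_nf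
  have hsc : Complex.sin (θ:ℂ) = ((Real.sin θ : ℝ) : ℂ) := (Complex.ofReal_sin θ).symm
  have hone := one_sub_exp ((θ:ℂ))
  rw [hE2, hsc, ← hE] at hone
  have hEne : E ≠ 0 := Complex.exp_ne_zero _
  have hsne : ((Real.sin θ : ℝ) : ℂ) ≠ 0 := Complex.ofReal_ne_zero.mpr hs
  rw [hpow, hE2, inv_comb _ _ hsne hEne hone]
  push_cast
  ring


lemma realsum (n : ℕ) (hn : 2 ≤ n) :
    ∑ j ∈ Ico 1 n, 1/(4*Real.sin ((j:ℝ)*Real.pi/(n:ℝ))^2) = ((n:ℝ)^2-1)/12 := by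
  have hc : ((∑ j ∈ Ico 1 n, 1/(4*Real.sin ((j:ℝ)*Real.pi/(n:ℝ))^2) : ℝ) : ℂ)
      = ((((n:ℝ)^2-1)/12 : ℝ) : ℂ) := by
    rw [Complex.ofReal_sum]
    rw [Finset.sum_congr rfl (fun j hj => bridge n j hn (Finset.mem_Ico.mp hj).1
      (Finset.mem_Ico.mp hj).2)]
    rw [complexF n hn]
    push_cast
    ring
  exact_mod_cast hc

theorem stmt8 (k : ℕ) (hk : 2 ≤ k) :
    ∑ i ∈ Finset.Icc 1 (k - 1),
        1 / (4 * Real.sin ((i : ℝ) * Real.pi / (2 * (k : ℝ))) ^ 2)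
      = ((k : ℝ) - 1) * ((k : ℝ) + 1) / 6 := by
  have hkR : (k:ℝ) ≠ 0 := Nat.cast_ne_zero.mpr (by omega)
  set f : ℕ → ℝ := fun i => 1 / (4 * Real.sin ((i : ℝ) * Real.pi / (2 * (k : ℝ))) ^ 2) with hf
  have hIcc : Finset.Icc 1 (k-1) = Finset.Ico 1 k := by
    rw [← Finset.Ico_add_one_right_eq_Icc]
    congr 1
    omega
  have hR : ∑ j ∈ Ico 1 (2*k), f j = ((2*(k:ℝ))^2-1)/12 := by
    have := realsum (2*k) (by omega)
    have harg : ∀ j : ℕ, ((j:ℝ)*Real.pi/((2*k : ℕ):ℝ)) = (j:ℝ)*Real.pi/(2*(k:ℝ)) := by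
      intro j; push_cast; ring_nf
    simp only [harg] at this
    rw [hf]
    rw [this]
    push_cast
    ring
  have hsplit : ∑ j ∈ Ico 1 (2*k), f j = (∑ j ∈ Ico 1 k, f j) + ∑ j ∈ Ico k (2*k), f j := by
    rw [Finset.sum_Ico_consecutive _ (by omega) (by omega)]
  have hbot : ∑ j ∈ Ico k (2*k), f j = f k + ∑ j ∈ Ico (k+1) (2*k), f j :=
    Finset.sum_eq_sum_Ico_succ_bot (by omega) _
  have hfk : f k = 1/4 := by
    rw [hf]
    have : (k:ℝ) * Real.pi / (2*(k:ℝ)) = Real.pi/2 := by field_simp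
    simp only [this, Real.sin_pi_div_two]
    norm_num
  have hrefl : ∑ j ∈ Ico (k+1) (2*k), f j = ∑ j ∈ Ico 1 k, f j := by
    apply Finset.sum_nbij' (i := fun j => 2*k - j) (j := fun i => 2*k - i)
    · intro a ha; simp only [Finset.mem_Ico] at *; omega
    · intro a ha; simp only [Finset.mem_Ico] at *; omega
    · intro a ha; simp only [Finset.mem_Ico] at ha; omega
    · intro a ha; simp only [Finset.mem_Ico] at ha; omega
    · intro a ha
      simp only [Finset.mem_Ico] at ha
      rw [hf]
      have hcast : ((2*k - a : ℕ) : ℝ) = 2*(k:ℝ) - (a:ℝ) := by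
        have : a ≤ 2*k := by omega
        push_cast [this]; ring
      simp only [hcast]
      have harg : (2*(k:ℝ) - (a:ℝ)) * Real.pi / (2*(k:ℝ))
          = Real.pi - (a:ℝ) * Real.pi / (2*(k:ℝ)) := by field_simp
      rw [harg, Real.sin_pi_sub]
  rw [hIcc]
  have h2 : (∑ j ∈ Ico 1 k, f j) = (((2*(k:ℝ))^2-1)/12 - 1/4)/2 := by
    rw [hsplit, hbot, hfk, hrefl] at hR
    linarith
  rw [show (∑ i ∈ Finset.Ico 1 k, 1 / (4 * Real.sin ((i : ℝ) * Real.pi / (2 * (k : ℝ))) ^ 2)) = ∑ j ∈ Ico 1 k, f j from rfl, h2]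
  ring
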